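/- Let n ≥ 3, let λ be a nonzero real number, and let B = J_n(λ) be the n×n Jordan block with λ on the diagonal and 1 on the superdiagonal. Then the system x(k+1) = (I + u(k)B)x(k) is not nearly controllable. -/

import Mathlib

open Matrix MeasureTheory Polynomial

/-- The product `(I + u(l-1)B) ⋯ (I + u(1)B)(I + u(0)B)`. -/
noncomputable def prodCtrl {n : ℕ} (B : Matrix (Fin n) (Fin n) ℝ) (l : ℕ) (u : ℕ → ℝ) :
    Matrix (Fin n) (Fin n) ℝ :=
  ((List.range l).reverse.map fun k => (1 : Matrix (Fin n) (Fin n) ℝ) + u k • B).prod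

/-- `ξ` can be steered to `η` in the system `x(k+1) = (I + u(k)B) x(k)`. -/
noncomputable def steers {n : ℕ} (B : Matrix (Fin n) (Fin n) ℝ) (ξ η : Fin n → ℝ) : Prop :=
  ∃ l : ℕ, 1 ≤ l ∧ ∃ u : ℕ → ℝ, (prodCtrl B l u).mulVec ξ = η

/-- Near-controllability: outside two Lebesgue-null sets, any state can be steered to any state. -/
noncomputable def nearlyControllable {n : ℕ} (B : Matrix (Fin n) (Fin n) ℝ) : Prop :=
  ∃ E F : Set (Fin n → ℝ), volume E = 0 ∧ volume F = 0 ∧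
    ∀ ξ ∉ E, ∀ η ∉ F, steers B ξ η

/-- The matrix `[ξ, Bξ, B²ξ, …, B^{n-1}ξ]`. -/
noncomputable def ctrlMat {n : ℕ} (B : Matrix (Fin n) (Fin n) ℝ) (ξ : Fin n → ℝ) :
    Matrix (Fin n) (Fin n) ℝ :=
  Matrix.of fun i j => (B ^ (j : ℕ)).mulVec ξ i

/-- The `N × N` Jordan block with eigenvalue `lam`. -/
def jordanBlock (N : ℕ) (lam : ℝ) : Matrix (Fin N) (Fin N) ℝ :=
  Matrix.of fun i j => if i = j then lam else if (j : ℕ) = (i : ℕ) + 1 then 1 else 0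

/-- Block-diagonal Jordan matrix: `r` two-dimensional Jordan blocks with eigenvalues
`lam 0, …, lam (r-1)` followed by `1 × 1` blocks `lam r, …, lam (m-1)` (so `n = m + r`). -/
def pairJordan (n r : ℕ) (lam : ℕ → ℝ) : Matrix (Fin n) (Fin n) ℝ :=
  Matrix.of fun i j =>
    if (i : ℕ) = (j : ℕ) then
      (if (i : ℕ) < 2 * r then lam ((i : ℕ) / 2) else lam ((i : ℕ) - r))
    else if (j : ℕ) = (i : ℕ) + 1 ∧ (i : ℕ) < 2 * r ∧ (i : ℕ) % 2 = 0 then 1 else 0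


lemma prodCtrl_succ {n : ℕ} (B : Matrix (Fin n) (Fin n) ℝ) (l : ℕ) (u : ℕ → ℝ) :
    prodCtrl B (l+1) u = ((1 : Matrix (Fin n) (Fin n) ℝ) + u l • B) * prodCtrl B l u := by
  simp [prodCtrl, List.range_succ]

lemma keyToeplitz {n : ℕ} (lam : ℝ) (l : ℕ) (u : ℕ → ℝ) :
    ∃ c : ℕ → ℝ,
      (∀ i j : Fin n, prodCtrl (jordanBlock n lam) l u i j
          = if (i : ℕ) ≤ (j : ℕ) then c ((j : ℕ) - (i : ℕ)) else 0) ∧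
      2 * c 0 * c 2 ≤ (c 1)^2 := by
  induction l with
  | zero =>
    refine ⟨fun k => if k = 0 then 1 else 0, ?_, by norm_num⟩
    intro i j
    simp only [prodCtrl, List.range_zero, List.reverse_nil, List.map_nil, List.prod_nil]
    rw [Matrix.one_apply]
    by_cases h : i = j
    · subst h; simp
    · have hne : (i : ℕ) ≠ (j : ℕ) := by rwa [ne_eq, ← Fin.ext_iff]
      rw [if_neg h]
      split_ifs with h1 h2
      · omega
      · rfl
      · rfl
  | succ l ih =>
    obtain ⟨c, hc, hineq⟩ := ih
    set a : ℝ := 1 + u l * lam with ha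
    refine ⟨fun k => if k = 0 then a * c 0 else a * c k + u l * c (k-1), ?_, ?_⟩
    · intro i j
      rw [prodCtrl_succ, Matrix.mul_apply]
      have hF : ∀ k : Fin n, ((1 : Matrix (Fin n) (Fin n) ℝ) + u l • jordanBlock n lam) i k
          = if i = k then a else if (k : ℕ) = (i : ℕ) + 1 then u l else 0 := by
        intro k
        simp only [Matrix.add_apply, Matrix.smul_apply, Matrix.one_apply, jordanBlock,
          Matrix.of_apply, smul_eq_mul]
        split_ifs with h1 h2 <;> ring
      by_cases h : (i : ℕ) + 1 < n
      · set i' : Fin n := ⟨(i : ℕ) + 1, h⟩ with hi'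
        have hii' : i ≠ i' := by
          intro hh
          have := congrArg Fin.val hh
          simp [hi'] at this
        have hsum : ∑ k : Fin n,
            (((1 : Matrix (Fin n) (Fin n) ℝ) + u l • jordanBlock n lam) i k)
              * prodCtrl (jordanBlock n lam) l u k j
            = a * prodCtrl (jordanBlock n lam) l u i j
              + u l * prodCtrl (jordanBlock n lam) l u i' j := by
          rw [← Finset.sum_subset (Finset.subset_univ ({i, i'} : Finset (Fin n)))]
          · rw [Finset.sum_pair hii', hF i, hF i']
            have h1 : ¬ ((i : ℕ) = (i : ℕ) + 1) := by omega
            have h2 : i' ≠ i := Ne.symm hii'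
            rw [if_pos rfl, if_neg (by exact fun hh => h2 (by exact hh.symm)), if_pos rfl]
          · intro k _ hk
            rw [hF k]
            have hk1 : k ≠ i := fun hh => hk (by simp [hh])
            have hk2 : k ≠ i' := fun hh => hk (by simp [hh])
            have hk2' : (k : ℕ) ≠ (i : ℕ) + 1 := by
              intro hh
              exact hk2 (Fin.ext (by simp [hi', hh]))
            rw [if_neg (fun hh => hk1 hh.symm), if_neg hk2', zero_mul]
        rw [hsum, hc i j, hc i' j]
        simp only [hi']
        rcases lt_trichotomy (j : ℕ) (i : ℕ) with hj | hj | hj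
        · rw [if_neg (by omega), if_neg (by omega), if_neg (by omega)]; ring
        · rw [if_pos (by omega), if_neg (by omega), if_pos (by omega)]
          have : (j : ℕ) - (i : ℕ) = 0 := by omega
          rw [this, if_pos rfl]; ring
        · rw [if_pos (by omega), if_pos (by omega), if_pos (by omega)]
          have h0 : (j : ℕ) - (i : ℕ) ≠ 0 := by omega
          rw [if_neg h0]
          have h1 : (j : ℕ) - ((i : ℕ) + 1) = ((j : ℕ) - (i : ℕ)) - 1 := by omega
          rw [h1]
      · -- i is the last index
        have hlast : ∀ k : Fin n, k ≠ i → ((k : ℕ) = (i : ℕ) + 1) = False := by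
          intro k _
          simp only [eq_iff_iff, iff_false]
          have := k.isLt
          omega
        have hsum : ∑ k : Fin n,
            (((1 : Matrix (Fin n) (Fin n) ℝ) + u l • jordanBlock n lam) i k)
              * prodCtrl (jordanBlock n lam) l u k j
            = a * prodCtrl (jordanBlock n lam) l u i j := by
          rw [Finset.sum_eq_single i]
          · rw [hF i, if_pos rfl]
          · intro k _ hk
            rw [hF k, if_neg (fun hh => hk hh.symm), if_neg (by have := k.isLt; omega),
              zero_mul]
          · intro hh; exact absurd (Finset.mem_univ i) hh
        rw [hsum, hc i j]
        have hji : (j : ℕ) ≤ (i : ℕ) := by have := j.isLt; omega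
        rcases lt_or_eq_of_le hji with hj | hj
        · rw [if_neg (by omega), if_neg (by omega)]; ring
        · rw [if_pos (by omega), if_pos (by omega)]
          have : (j : ℕ) - (i : ℕ) = 0 := by omega
          rw [this]; simp
    · simp only [if_neg (one_ne_zero), if_neg (two_ne_zero), if_pos rfl]
      norm_num
      nlinarith [sq_nonneg (u l * c 0), mul_nonneg (sq_nonneg a) (sub_nonneg.mpr hineq)]

set_option maxHeartbeats 4000000 in
/-- for `n ≥ 3` and `λ ≠ 0`, the system built on the Jordan block `J_n(λ)`
is not nearly controllable. -/
theorem stmt14 {n : ℕ} (hn : 3 ≤ n) (lam : ℝ) (hlam : lam ≠ 0) :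
    ¬ nearlyControllable (jordanBlock n lam) := by
  rintro ⟨E, F, hE, hF, hEF⟩
  set i1 : Fin n := ⟨n - 1, by omega⟩ with hi1
  set i2 : Fin n := ⟨n - 2, by omega⟩ with hi2
  set i3 : Fin n := ⟨n - 3, by omega⟩ with hi3
  have h21 : i2 ≠ i1 := by rw [Fin.ne_iff_vne]; simp [hi1, hi2]; omega
  have h31 : i3 ≠ i1 := by rw [Fin.ne_iff_vne]; simp [hi1, hi3]; omega
  have h32 : i3 ≠ i2 := by rw [Fin.ne_iff_vne]; simp [hi2, hi3]; omega
  -- pick ξ outside E with ξ i1 ≠ 0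
  set H : Submodule ℝ (Fin n → ℝ) := LinearMap.ker (LinearMap.proj (R := ℝ) i1) with hH
  have hHvol : volume (H : Set (Fin n → ℝ)) = 0 := by
    apply Measure.addHaar_submodule
    intro htop
    have h1 : (fun _ : Fin n => (1 : ℝ)) ∈ H := htop ▸ Submodule.mem_top
    rw [hH, LinearMap.mem_ker] at h1
    simpa using h1
  have hne : (E ∪ (H : Set (Fin n → ℝ)))ᶜ.Nonempty := by
    rw [Set.nonempty_compl]
    intro huniv
    have : volume (Set.univ : Set (Fin n → ℝ)) = 0 := by
      rw [← huniv]
      exact le_antisymm (le_trans (measure_union_le _ _) (by rw [hE, hHvol]; simp))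
        zero_le
    exact (IsOpen.measure_ne_zero volume isOpen_univ Set.univ_nonempty) this
  obtain ⟨ξ, hξ⟩ := hne
  rw [Set.mem_compl_iff, Set.mem_union, not_or] at hξ
  obtain ⟨hξE, hξH⟩ := hξ
  have ht : ξ i1 ≠ 0 := by
    intro hh
    exact hξH (by rw [hH]; exact LinearMap.mem_ker.mpr (by simpa using hh))
  set t : ℝ := ξ i1 with htdef
  set Q : (Fin n → ℝ) → ℝ := fun η =>
    (t * η i2 - η i1 * ξ i2)^2
      - 2 * η i1 * (t^2 * η i3 - t * η i1 * ξ i3 - (t * η i2 - η i1 * ξ i2) * ξ i2)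
    with hQdef
  -- every reachable η satisfies 0 ≤ Q η
  have hreach : ∀ η : Fin n → ℝ, steers (jordanBlock n lam) ξ η → 0 ≤ Q η := by
    rintro η ⟨l, -, u, hu⟩
    obtain ⟨c, hc, hineq⟩ := keyToeplitz (n := n) lam l u
    set P := prodCtrl (jordanBlock n lam) l u with hP
    have happ : ∀ i : Fin n, η i = ∑ j : Fin n, P i j * ξ j := by
      intro i
      rw [← hu]
      simp [Matrix.mulVec, dotProduct]
    have hv1 : η i1 = c 0 * ξ i1 := by
      rw [happ i1, Finset.sum_eq_single i1]
      · rw [hc]; simp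
      · intro j _ hj
        rw [hc, if_neg, zero_mul]
        have := j.isLt
        have : (j : ℕ) ≠ n - 1 := fun hh => hj (Fin.ext (by simpa [hi1] using hh))
        simp only [hi1]
        omega
      · intro hh; exact absurd (Finset.mem_univ i1) hh
    have hv2 : η i2 = c 0 * ξ i2 + c 1 * ξ i1 := by
      rw [happ i2]
      rw [← Finset.sum_subset (Finset.subset_univ ({i2, i1} : Finset (Fin n)))]
      · rw [Finset.sum_pair h21, hc i2 i2, hc i2 i1]
        rw [if_pos (le_refl _), if_pos (by simp [hi1, hi2]; omega)]
        have e1 : (i2 : ℕ) - (i2 : ℕ) = 0 := by omega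
        have e2 : (i1 : ℕ) - (i2 : ℕ) = 1 := by simp [hi1, hi2]; omega
        rw [e1, e2]
      · intro j _ hj
        simp only [Finset.mem_insert, Finset.mem_singleton, not_or] at hj
        rw [hc, if_neg, zero_mul]
        have hjlt := j.isLt
        have : (j : ℕ) ≠ n - 1 := fun hh => hj.2 (Fin.ext (by simpa [hi1] using hh))
        have : (j : ℕ) ≠ n - 2 := fun hh => hj.1 (Fin.ext (by simpa [hi2] using hh))
        simp only [hi2]
        omega
    have hv3 : η i3 = c 0 * ξ i3 + c 1 * ξ i2 + c 2 * ξ i1 := by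
      rw [happ i3]
      rw [← Finset.sum_subset (Finset.subset_univ ({i3, i2, i1} : Finset (Fin n)))]
      · rw [Finset.sum_insert (by simp [h32, h31]), Finset.sum_pair h21,
          hc i3 i3, hc i3 i2, hc i3 i1]
        rw [if_pos (le_refl _), if_pos (by simp [hi2, hi3]; omega),
          if_pos (by simp [hi1, hi3]; omega)]
        have e1 : (i3 : ℕ) - (i3 : ℕ) = 0 := by omega
        have e2 : (i2 : ℕ) - (i3 : ℕ) = 1 := by simp [hi2, hi3]; omega
        have e3 : (i1 : ℕ) - (i3 : ℕ) = 2 := by simp [hi1, hi3]; omega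
        rw [e1, e2, e3]
        ring
      · intro j _ hj
        simp only [Finset.mem_insert, Finset.mem_singleton, not_or] at hj
        rw [hc, if_neg, zero_mul]
        have hjlt := j.isLt
        have : (j : ℕ) ≠ n - 1 := fun hh => hj.2.2 (Fin.ext (by simpa [hi1] using hh))
        have : (j : ℕ) ≠ n - 2 := fun hh => hj.2.1 (Fin.ext (by simpa [hi2] using hh))
        have : (j : ℕ) ≠ n - 3 := fun hh => hj.1 (Fin.ext (by simpa [hi3] using hh))
        simp only [hi3]
        omega
    have hQval : Q η = t^4 * ((c 1)^2 - 2 * c 0 * c 2) := by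
      rw [hQdef]
      simp only
      rw [hv1, hv2, hv3, htdef]
      ring
    rw [hQval]
    have h4 : (0:ℝ) ≤ t^4 := by positivity
    nlinarith
  -- the set where Q < 0 is open, nonempty and contained in F
  set S : Set (Fin n → ℝ) := Q ⁻¹' (Set.Iio 0) with hS
  have hQcont : Continuous Q := by
    rw [hQdef]
    fun_prop
  have hSopen : IsOpen S := hQcont.isOpen_preimage _ isOpen_Iio
  have hSne : S.Nonempty := by
    refine ⟨fun i => if i = i1 then t else if i = i2 then ξ i2
      else if i = i3 then ξ i3 + t else 0, ?_⟩
    rw [hS, Set.mem_preimage, Set.mem_Iio, hQdef]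
    simp [h21, h31, h32]
    have ht4 : (0:ℝ) < t^4 := by positivity
    nlinarith
  have hSF : S ⊆ F := by
    intro η hη
    by_contra hηF
    have := hreach η (hEF ξ hξE η hηF)
    rw [hS, Set.mem_preimage, Set.mem_Iio] at hη
    linarith
  have : volume S = 0 := le_antisymm (hF ▸ measure_mono hSF) zero_le
  exact (hSopen.measure_ne_zero volume hSne) this
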